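/- arXiv:1701.07416 — 3 statements merged into one kernel-verified Lean document; each statement's English description precedes it below -/
import Mathlib

section
/- Let n, w, t be integers with 1 ≤ w ≤ n and 1 ≤ t ≤ n, let e ∈ F₂ⁿ be a vector of Hamming weight t, and let i be a coordinate with e_i = 1. Then the number of vectors h ∈ F₂ⁿ of Hamming weight w with h_i = 1 and ⟨e,h⟩ = 1 (inner product modulo 2) equals Σ_{0≤j≤w−1, j even} C(t−1,j)·C(n−t,w−1−j). Consequently, since the number of weight-w vectors h with h_i = 1 is C(n−1,w−1), the probability q₁ that ⟨e,h⟩ = 1 for h uniform on {h : w_H(h)=w, h_i=1} equals (Σ_{0≤j≤w−1, j even} C(t−1,j)·C(n−t,w−1−j))/C(n−1,w−1), which depends neither on e nor on i. -/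
open Finset

lemma zmod2_iff (a : ZMod 2) : a ≠ 0 ↔ a = 1 := by revert a; decide

lemma natCast_zmod2 (k : ℕ) : ((k:ZMod 2) = 1) ↔ Odd k := by
  rw [Nat.odd_iff, show (1 : ZMod 2) = ((1:ℕ) : ZMod 2) by norm_num,
    ZMod.natCast_eq_natCast_iff, Nat.ModEq]

lemma zmod2_mul (a b : ZMod 2) : a * b = if b = 1 ∧ a = 1 then 1 else 0 := by
  revert a b; decide

lemma card_filter_fun (n : ℕ) (Q : Finset (Fin n) → Prop) [DecidablePred Q] :
    ((univ : Finset (Fin n → ZMod 2)).filter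
        (fun h => Q (univ.filter (fun j => h j = 1)))).card
      = (univ.filter Q).card := by
  apply Finset.card_bij (fun h _ => univ.filter (fun j => h j = 1))
  · intro h hh
    simp only [mem_filter, mem_univ, true_and] at hh ⊢
    exact hh
  · intro h hh g hg hfg
    funext j
    have : (j ∈ univ.filter (fun j => h j = 1)) ↔ j ∈ univ.filter (fun j => g j = 1) := by
      rw [hfg]
    simp only [mem_filter, mem_univ, true_and] at this
    have h2 : ∀ a : ZMod 2, a = 0 ∨ a = 1 := by decide
    rcases h2 (h j) with h3 | h3 <;> rcases h2 (g j) with h4 | h4 <;>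
      simp_all
  · intro S hS
    simp only [mem_filter, mem_univ, true_and] at hS
    refine ⟨fun j => if j ∈ S then 1 else 0, ?_, ?_⟩
    · simp only [mem_filter, mem_univ, true_and]
      convert hS using 2
      ext j
      simp only [mem_filter, mem_univ, true_and]
      split <;> simp_all
    · ext j
      simp only [mem_filter, mem_univ, true_and]
      split <;> simp_all

lemma hammingNorm_eq (n : ℕ) (h : Fin n → ZMod 2) :
    hammingNorm h = (univ.filter (fun j => h j = 1)).card := by
  unfold hammingNorm
  congr 1
  exact Finset.filter_congr (fun j _ => zmod2_iff (h j))

lemma inner_eq (n : ℕ) (e h : Fin n → ZMod 2) :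
    (∑ j, e j * h j = 1) ↔
      Odd ((univ.filter (fun j => h j = 1) ∩ univ.filter (fun j => e j = 1)).card) := by
  have step1 : ∑ j, e j * h j =
      ∑ j, if h j = 1 ∧ e j = 1 then (1 : ZMod 2) else 0 :=
    Finset.sum_congr rfl (fun j _ => zmod2_mul (e j) (h j))
  rw [step1, Finset.sum_boole, ← Finset.filter_and, natCast_zmod2]

lemma count_snd (n w : ℕ) (hw1 : 1 ≤ w) (i : Fin n) :
    (univ.filter (fun S : Finset (Fin n) => S.card = w ∧ i ∈ S)).card
      = (n - 1).choose (w - 1) := by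
  have h1 : ((univ:Finset (Fin n)).erase i).card = n - 1 := by simp
  rw [← h1, ← Finset.card_powersetCard]
  apply Finset.card_bij (fun S _ => S.erase i)
  · intro S hS
    simp only [mem_filter, mem_univ, true_and] at hS
    simp only [mem_powersetCard]
    refine ⟨fun x hx => ?_, ?_⟩
    · simp only [mem_erase] at hx ⊢
      exact ⟨hx.1, mem_univ _⟩
    · rw [Finset.card_erase_of_mem hS.2, hS.1]
  · intro S hS T hT h
    simp only [mem_filter, mem_univ, true_and] at hS hT
    rw [← Finset.insert_erase hS.2, ← Finset.insert_erase hT.2, h]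
  · intro T hT
    simp only [mem_powersetCard] at hT
    have hiT : i ∉ T := fun h => by simpa using (hT.1 h)
    refine ⟨insert i T, ?_, ?_⟩
    · simp only [mem_filter, mem_univ, true_and]
      constructor
      · rw [Finset.card_insert_of_notMem hiT, hT.2]; omega
      · exact mem_insert_self _ _
    · rw [Finset.erase_insert hiT]

lemma card_inter_succ {n : ℕ} (S E : Finset (Fin n)) (i : Fin n) (hiS : i ∈ S) (hiE : i ∈ E) :
    (S ∩ E).card = (S ∩ E.erase i).card + 1 := by
  rw [Finset.inter_erase, Finset.card_erase_of_mem (mem_inter.2 ⟨hiS, hiE⟩)]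
  have : 1 ≤ (S ∩ E).card := Finset.card_pos.2 ⟨i, mem_inter.2 ⟨hiS, hiE⟩⟩
  omega

lemma count_main (n w t : ℕ) (hw1 : 1 ≤ w) (E : Finset (Fin n)) (hE : E.card = t)
    (i : Fin n) (hi : i ∈ E) :
    (univ.filter (fun S : Finset (Fin n) => S.card = w ∧ i ∈ S ∧ Odd (S ∩ E).card)).card
      = ∑ j ∈ Finset.range w,
        if Even j then (t - 1).choose j * (n - t).choose (w - 1 - j) else 0 := by
  have hEe : (E.erase i).card = t - 1 := by rw [Finset.card_erase_of_mem hi, hE]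
  have hEc : ((univ : Finset (Fin n)) \ E).card = n - t := by
    rw [Finset.card_sdiff_of_subset (subset_univ E), hE, card_univ, Fintype.card_fin]
  have hmaps : ∀ S ∈ univ.filter
      (fun S : Finset (Fin n) => S.card = w ∧ i ∈ S ∧ Odd (S ∩ E).card),
      (S ∩ E.erase i).card ∈ Finset.range w := by
    intro S hS
    simp only [mem_filter, mem_univ, true_and] at hS
    have h1 : S ∩ E.erase i ⊆ S.erase i := by
      intro x hx
      simp only [mem_inter, mem_erase] at hx ⊢
      exact ⟨hx.2.1, hx.1⟩
    have := Finset.card_le_card h1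
    rw [Finset.card_erase_of_mem hS.2.1, hS.1] at this
    simp only [Finset.mem_range]
    omega
  rw [Finset.card_eq_sum_card_fiberwise hmaps]
  refine Finset.sum_congr rfl (fun j hj => ?_)
  simp only [Finset.mem_range] at hj
  by_cases hev : Even j
  · simp only [hev, if_true]
    rw [← hEe, ← Finset.card_powersetCard, ← hEc, ← Finset.card_powersetCard,
      ← Finset.card_product]
    apply Finset.card_bij (fun S _ => (S ∩ E.erase i, S \ E))
    · intro S hS
      simp only [mem_filter, mem_univ, true_and] at hS
      obtain ⟨⟨hcard, hiS, hodd⟩, hfib⟩ := hS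
      simp only [Finset.mem_product, mem_powersetCard]
      have hc := Finset.card_inter_add_card_sdiff S E
      have hc2 := card_inter_succ S E i hiS hi
      refine ⟨⟨inter_subset_right, hfib⟩,
        ⟨Finset.sdiff_subset_sdiff (subset_univ S) le_rfl, by omega⟩⟩
    · intro S hS T hT hprod
      simp only [mem_filter, mem_univ, true_and] at hS hT
      have key : ∀ U : Finset (Fin n), i ∈ U → U = insert i ((U ∩ E.erase i) ∪ (U \ E)) := by
        intro U hiU
        ext x
        simp only [mem_insert, mem_union, mem_inter, mem_erase, mem_sdiff]
        constructor
        · intro hx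
          by_cases hxi : x = i
          · exact Or.inl hxi
          · by_cases hxE : x ∈ E
            · exact Or.inr (Or.inl ⟨hx, hxi, hxE⟩)
            · exact Or.inr (Or.inr ⟨hx, hxE⟩)
        · rintro (rfl | ⟨hx, _⟩ | ⟨hx, _⟩) <;> assumption
      have h1 := key S hS.1.2.1
      have h2 := key T hT.1.2.1
      simp only [Prod.mk.injEq] at hprod
      rw [h1, h2, hprod.1, hprod.2]
    · rintro ⟨A, B⟩ hAB
      simp only [Finset.mem_product, mem_powersetCard] at hAB
      obtain ⟨⟨hAsub, hAcard⟩, hBsub, hBcard⟩ := hAB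
      have hiA : i ∉ A := fun h => (mem_erase.1 (hAsub h)).1 rfl
      have hiB : i ∉ B := fun h => (mem_sdiff.1 (hBsub h)).2 hi
      have hAE : ∀ x ∈ A, x ∈ E ∧ x ≠ i := fun x hx => by
        have := mem_erase.1 (hAsub hx); exact ⟨this.2, this.1⟩
      have hBE : ∀ x ∈ B, x ∉ E := fun x hx => (mem_sdiff.1 (hBsub hx)).2
      have hdisj : Disjoint A B := by
        rw [Finset.disjoint_left]
        intro x hxA hxB
        exact hBE x hxB (hAE x hxA).1
      have hcard : (insert i (A ∪ B)).card = w := by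
        rw [Finset.card_insert_of_notMem (by simp [hiA, hiB]),
          Finset.card_union_of_disjoint hdisj, hAcard, hBcard]
        omega
      have hinter : insert i (A ∪ B) ∩ E.erase i = A := by
        ext x
        simp only [mem_inter, mem_insert, mem_union, mem_erase]
        constructor
        · rintro ⟨(rfl | hx | hx), hxi, hxE⟩
          · exact absurd rfl hxi
          · exact hx
          · exact absurd hxE (hBE x hx)
        · intro hx
          exact ⟨Or.inr (Or.inl hx), (hAE x hx).2, (hAE x hx).1⟩
      have hsdiff : insert i (A ∪ B) \ E = B := by
        ext x
        simp only [mem_sdiff, mem_insert, mem_union]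
        constructor
        · rintro ⟨(rfl | hx | hx), hxE⟩
          · exact absurd hi hxE
          · exact absurd (hAE x hx).1 hxE
          · exact hx
        · intro hx
          exact ⟨Or.inr (Or.inr hx), hBE x hx⟩
      refine ⟨insert i (A ∪ B), ?_, ?_⟩
      · simp only [mem_filter, mem_univ, true_and]
        have hiS : i ∈ insert i (A ∪ B) := mem_insert_self _ _
        have hc2 := card_inter_succ (insert i (A ∪ B)) E i hiS hi
        rw [hinter] at hc2
        refine ⟨⟨hcard, hiS, ?_⟩, by rw [hinter, hAcard]⟩
        rw [hc2, hAcard]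
        exact Even.add_one hev
      · rw [Prod.mk.injEq]
        exact ⟨hinter, hsdiff⟩
  · simp only [hev, if_false]
    rw [Finset.card_eq_zero, Finset.eq_empty_iff_forall_notMem]
    intro S hS
    simp only [mem_filter, mem_univ, true_and] at hS
    obtain ⟨⟨hcard, hiS, hodd⟩, hfib⟩ := hS
    have := card_inter_succ S E i hiS hi
    rw [hfib] at this
    rw [this] at hodd
    exact hev (by simpa using Nat.Odd.sub_odd hodd odd_one)

/-- count and probability of `⟨e,h⟩ = 1` over weight-`w` vectors `h`
with `h i = 1`, when the error position `i` satisfies `e i = 1`. -/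
theorem statistical_decoding_q1
    (n w t : ℕ) (hw1 : 1 ≤ w) (hwn : w ≤ n) (ht1 : 1 ≤ t) (htn : t ≤ n)
    (e : Fin n → ZMod 2) (he : hammingNorm e = t)
    (i : Fin n) (hei : e i = 1) :
    (Nat.card {h : Fin n → ZMod 2 //
        hammingNorm h = w ∧ h i = 1 ∧ ∑ j, e j * h j = 1} =
      ∑ j ∈ Finset.range w,
        if Even j then (t - 1).choose j * (n - t).choose (w - 1 - j) else 0) ∧
    (Nat.card {h : Fin n → ZMod 2 // hammingNorm h = w ∧ h i = 1} =
      (n - 1).choose (w - 1)) ∧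
    (((Nat.card {h : Fin n → ZMod 2 //
        hammingNorm h = w ∧ h i = 1 ∧ ∑ j, e j * h j = 1} : ℝ) /
      (Nat.card {h : Fin n → ZMod 2 // hammingNorm h = w ∧ h i = 1} : ℝ)) =
      ((∑ j ∈ Finset.range w,
        if Even j then ((t - 1).choose j * (n - t).choose (w - 1 - j) : ℝ) else 0) /
        ((n - 1).choose (w - 1) : ℝ))) := by
  set E : Finset (Fin n) := univ.filter (fun j => e j = 1) with hEdef
  have hE : E.card = t := by rw [hEdef, ← hammingNorm_eq, he]
  have hiE : i ∈ E := by simp [hEdef, hei]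
  have key1 : Nat.card {h : Fin n → ZMod 2 //
      hammingNorm h = w ∧ h i = 1 ∧ ∑ j, e j * h j = 1} =
      ∑ j ∈ Finset.range w,
        if Even j then (t - 1).choose j * (n - t).choose (w - 1 - j) else 0 := by
    rw [Nat.card_eq_fintype_card, Fintype.card_subtype]
    have heq : (univ : Finset (Fin n → ZMod 2)).filter
        (fun h => hammingNorm h = w ∧ h i = 1 ∧ ∑ j, e j * h j = 1)
        = (univ : Finset (Fin n → ZMod 2)).filter
        (fun h => (fun S : Finset (Fin n) => S.card = w ∧ i ∈ S ∧ Odd ((S ∩ E).card))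
          (univ.filter (fun j => h j = 1))) := by
      refine Finset.filter_congr (fun h _ => ?_)
      rw [hammingNorm_eq]
      refine and_congr_right (fun _ => and_congr ?_ ?_)
      · simp
      · exact inner_eq n e h
    rw [heq]
    exact (card_filter_fun n _).trans (count_main n w t hw1 E hE i hiE)
  have key2 : Nat.card {h : Fin n → ZMod 2 // hammingNorm h = w ∧ h i = 1} =
      (n - 1).choose (w - 1) := by
    rw [Nat.card_eq_fintype_card, Fintype.card_subtype]
    have heq : (univ : Finset (Fin n → ZMod 2)).filter
        (fun h => hammingNorm h = w ∧ h i = 1)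
        = (univ : Finset (Fin n → ZMod 2)).filter
        (fun h => (fun S : Finset (Fin n) => S.card = w ∧ i ∈ S)
          (univ.filter (fun j => h j = 1))) := by
      refine Finset.filter_congr (fun h _ => ?_)
      rw [hammingNorm_eq]
      refine and_congr_right (fun _ => ?_)
      simp
    rw [heq]
    exact (card_filter_fun n _).trans (count_snd n w hw1 i)
  refine ⟨key1, key2, ?_⟩
  rw [key1, key2]
  congr 1
  rw [Nat.cast_sum]
  refine Finset.sum_congr rfl (fun j _ => ?_)
  split <;> push_cast <;> ring
end

section
/- Let n, w, t be integers with 1 ≤ w ≤ n and 1 ≤ t ≤ n−1, let e ∈ F₂ⁿ be a vector of Hamming weight t, and let i be a coordinate with e_i = 0. Then the number of vectors h ∈ F₂ⁿ of Hamming weight w with h_i = 1 and ⟨e,h⟩ = 1 (inner product modulo 2) equals Σ_{0≤j≤w−1, j odd} C(t,j)·C(n−t−1,w−1−j). Consequently the probability q₀ that ⟨e,h⟩ = 1 for h uniform on {h : w_H(h)=w, h_i=1} equals (Σ_{0≤j≤w−1, j odd} C(t,j)·C(n−t−1,w−1−j))/C(n−1,w−1), which depends neither on e nor on i. -/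
open Finset

lemma cast_eq_one_iff_odd (c : ℕ) : ((c : ZMod 2) = 1) ↔ Odd c := by
  rw [Nat.odd_iff]
  rw [show ((c : ZMod 2)) = ((c % 2 : ℕ) : ZMod 2) by rw [ZMod.natCast_mod]]
  have : c % 2 = 0 ∨ c % 2 = 1 := by omega
  rcases this with h | h <;> simp [h]

lemma union_inter_eq_left {α : Type*} [DecidableEq α] {E P Q : Finset α}
    (hP : P ⊆ E) (hQ : ∀ a ∈ Q, a ∉ E) : (P ∪ Q) ∩ E = P := by
  ext a
  simp only [mem_inter, mem_union]
  constructor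
  · rintro ⟨h | h, hE⟩
    · exact h
    · exact absurd hE (hQ _ h)
  · intro h
    exact ⟨Or.inl h, hP h⟩

lemma count_fixed {α : Type*} [DecidableEq α] (E A : Finset α) (hd : Disjoint E A)
    (m j : ℕ) (hj : j ≤ m) :
    ((E ∪ A).powerset.filter (fun S => S.card = m ∧ (S ∩ E).card = j)).card
      = E.card.choose j * A.card.choose (m - j) := by
  rw [← Finset.card_powersetCard, ← Finset.card_powersetCard, ← Finset.card_product]
  apply Finset.card_nbij' (fun S => (S ∩ E, S ∩ A)) (fun p => p.1 ∪ p.2)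
  · intro S hS
    simp only [Finset.mem_coe, mem_filter, mem_powerset] at hS
    obtain ⟨hsub, hcard, hint⟩ := hS
    have hunion : (S ∩ E) ∪ (S ∩ A) = S := by
      rw [← Finset.inter_union_distrib_left, Finset.inter_eq_left.2 hsub]
    have hdisj : Disjoint (S ∩ E) (S ∩ A) :=
      hd.mono inter_subset_right inter_subset_right
    have hcardA : (S ∩ A).card = m - j := by
      have := Finset.card_union_of_disjoint hdisj
      rw [hunion, hcard, hint] at this
      omega
    simp [Finset.mem_product, Finset.mem_powersetCard, inter_subset_right, hint, hcardA]
  · intro p hp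
    simp only [Finset.mem_coe, Finset.mem_product, Finset.mem_powersetCard] at hp
    obtain ⟨⟨h1, h1c⟩, ⟨h2, h2c⟩⟩ := hp
    have hdisj : Disjoint p.1 p.2 := hd.mono h1 h2
    have e1 : (p.1 ∪ p.2) ∩ E = p.1 :=
      union_inter_eq_left h1 (fun a ha => Finset.disjoint_right.mp hd (h2 ha))
    simp only [Finset.mem_coe, mem_filter, mem_powerset]
    refine ⟨union_subset_union h1 h2, ?_, ?_⟩
    · rw [Finset.card_union_of_disjoint hdisj, h1c, h2c]; omega
    · rw [e1, h1c]
  · intro S hS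
    simp only [Finset.mem_coe, mem_filter, mem_powerset] at hS
    dsimp only
    rw [← Finset.inter_union_distrib_left, Finset.inter_eq_left.2 hS.1]
  · intro p hp
    simp only [Finset.mem_coe, Finset.mem_product, Finset.mem_powersetCard] at hp
    obtain ⟨⟨h1, _⟩, ⟨h2, _⟩⟩ := hp
    have e1 : (p.1 ∪ p.2) ∩ E = p.1 :=
      union_inter_eq_left h1 (fun a ha => Finset.disjoint_right.mp hd (h2 ha))
    have e2 : (p.1 ∪ p.2) ∩ A = p.2 := by
      rw [union_comm]
      exact union_inter_eq_left h2 (fun a ha => Finset.disjoint_left.mp hd (h1 ha))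
    simp [e1, e2]

lemma count_odd {α : Type*} [DecidableEq α] (E A : Finset α) (hd : Disjoint E A) (m : ℕ) :
    ((E ∪ A).powerset.filter (fun S => S.card = m ∧ Odd (S ∩ E).card)).card
      = ∑ j ∈ Finset.range (m + 1),
          if Odd j then E.card.choose j * A.card.choose (m - j) else 0 := by
  rw [Finset.card_eq_sum_card_fiberwise (f := fun S => (S ∩ E).card)
    (t := Finset.range (m + 1)) ?_]
  · apply Finset.sum_congr rfl
    intro j hj
    rw [Finset.mem_range] at hj
    by_cases hodd : Odd j
    · rw [if_pos hodd, ← count_fixed E A hd m j (by omega)]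
      congr 1
      ext S
      simp only [mem_filter, mem_powerset]
      constructor
      · rintro ⟨⟨h1, h2, h3⟩, h4⟩; exact ⟨h1, h2, h4⟩
      · rintro ⟨h1, h2, h4⟩; exact ⟨⟨h1, h2, h4 ▸ hodd⟩, h4⟩
    · rw [if_neg hodd]
      rw [Finset.card_eq_zero]
      ext S
      simp only [mem_filter, mem_powerset, Finset.notMem_empty, iff_false]
      rintro ⟨⟨h1, h2, h3⟩, h4⟩
      exact hodd (h4 ▸ h3)
  · intro S hS
    simp only [Finset.mem_coe, mem_filter, mem_powerset] at hS
    show (S ∩ E).card ∈ Finset.range (m + 1)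
    rw [Finset.mem_range]
    have : (S ∩ E).card ≤ S.card := Finset.card_le_card inter_subset_left
    omega

/-- count and probability of `⟨e,h⟩ = 1` over weight-`w` vectors `h`
with `h i = 1`, when the position `i` satisfies `e i = 0`. -/
theorem statistical_decoding_q0
    (n w t : ℕ) (hw1 : 1 ≤ w) (hwn : w ≤ n) (ht1 : 1 ≤ t) (htn : t ≤ n - 1)
    (e : Fin n → ZMod 2) (he : hammingNorm e = t)
    (i : Fin n) (hei : e i = 0) :
    (Nat.card {h : Fin n → ZMod 2 //
        hammingNorm h = w ∧ h i = 1 ∧ ∑ j, e j * h j = 1} =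
      ∑ j ∈ Finset.range w,
        if Odd j then t.choose j * (n - t - 1).choose (w - 1 - j) else 0) ∧
    (Nat.card {h : Fin n → ZMod 2 // hammingNorm h = w ∧ h i = 1} =
      (n - 1).choose (w - 1)) ∧
    (((Nat.card {h : Fin n → ZMod 2 //
        hammingNorm h = w ∧ h i = 1 ∧ ∑ j, e j * h j = 1} : ℝ) /
      (Nat.card {h : Fin n → ZMod 2 // hammingNorm h = w ∧ h i = 1} : ℝ)) =
      ((∑ j ∈ Finset.range w,
        if Odd j then (t.choose j * (n - t - 1).choose (w - 1 - j) : ℝ) else 0) /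
        ((n - 1).choose (w - 1) : ℝ))) := by
  classical
  have hz2 : ∀ a : ZMod 2, a ≠ 0 ↔ a = 1 := by decide
  have hz2' : ∀ a : ZMod 2, a = 0 ∨ a = 1 := by decide
  set E : Finset (Fin n) := univ.filter (fun j => e j = 1) with hEdef
  -- support of a vector
  have hnorm : ∀ h : Fin n → ZMod 2,
      hammingNorm h = (univ.filter (fun j => h j = 1)).card := by
    intro h
    unfold hammingNorm
    congr 1
    ext a
    simp [hz2]
  have hEcard : E.card = t := by rw [← he, hnorm]
  have hiE : i ∉ E := by simp [hEdef, hei]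
  set A : Finset (Fin n) := (univ.erase i) \ E with hAdef
  have hEsub : E ⊆ univ.erase i := by
    intro a ha
    simp only [mem_erase, mem_univ, and_true]
    rintro rfl
    exact hiE ha
  have hEA : E ∪ A = univ.erase i := Finset.union_sdiff_of_subset hEsub
  have hdisj : Disjoint E A := Finset.disjoint_sdiff
  have hAcard : A.card = n - t - 1 := by
    rw [hAdef, Finset.card_sdiff_of_subset hEsub, Finset.card_erase_of_mem (mem_univ i),
      Finset.card_univ, Fintype.card_fin, hEcard]
    omega
  -- inner product fact
  have hsum : ∀ h : Fin n → ZMod 2,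
      (∑ j, e j * h j) = (((univ.filter (fun j => h j = 1)) ∩ E).card : ZMod 2) := by
    intro h
    have : ∀ j, e j * h j = if h j = 1 ∧ e j = 1 then (1 : ZMod 2) else 0 := by
      intro j
      rcases hz2' (e j) with h1 | h1 <;> rcases hz2' (h j) with h2 | h2 <;>
        simp [h1, h2]
    rw [Finset.sum_congr rfl (fun j _ => this j), Finset.sum_boole, ← Finset.filter_and,
      Finset.filter_and]
  -- indicator facts
  have hind : ∀ S : Finset (Fin n),
      univ.filter (fun j => (if j ∈ S then (1 : ZMod 2) else 0) = 1) = S := by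
    intro S
    ext a
    simp only [mem_filter, mem_univ, true_and]
    split_ifs with h <;> simp [h]
  -- COUNT 1
  have c1 : Nat.card {h : Fin n → ZMod 2 //
        hammingNorm h = w ∧ h i = 1 ∧ ∑ j, e j * h j = 1} =
      ∑ j ∈ Finset.range w,
        if Odd j then t.choose j * (n - t - 1).choose (w - 1 - j) else 0 := by
    rw [Nat.card_eq_fintype_card, Fintype.card_subtype]
    have key : (univ.filter (fun h : Fin n → ZMod 2 =>
          hammingNorm h = w ∧ h i = 1 ∧ ∑ j, e j * h j = 1)).card =
        ((E ∪ A).powerset.filter (fun S => S.card = w - 1 ∧ Odd (S ∩ E).card)).card := by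
      apply Finset.card_nbij' (fun h => (univ.filter (fun j => h j = 1)).erase i)
        (fun S => (fun j => if j ∈ insert i S then (1 : ZMod 2) else 0))
      · intro h hh
        simp only [Finset.mem_coe, mem_filter, mem_univ, true_and] at hh
        obtain ⟨h1, h2, h3⟩ := hh
        set Sh := univ.filter (fun j => h j = 1) with hShdef
        have hiSh : i ∈ Sh := by simp [hShdef, h2]
        simp only [Finset.mem_coe, mem_filter, mem_powerset]
        refine ⟨?_, ?_, ?_⟩
        · rw [hEA]; intro a ha
          simp only [mem_erase] at ha ⊢
          exact ⟨ha.1, mem_univ a⟩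
        · rw [Finset.card_erase_of_mem hiSh, ← hnorm h, h1]
        · have : (Sh.erase i) ∩ E = Sh ∩ E := by
            rw [Finset.erase_inter, Finset.erase_eq_of_notMem]
            simp [hiE]
          rw [this, ← cast_eq_one_iff_odd, ← hsum h, h3]
      · intro S hS
        simp only [Finset.mem_coe, mem_filter, mem_powerset] at hS
        obtain ⟨hsub, hcard, hodd⟩ := hS
        have hiS : i ∉ S := fun h => by
          have := hsub h; rw [hEA] at this; simp at this
        simp only [Finset.mem_coe, mem_filter, mem_univ, true_and]
        refine ⟨?_, ?_, ?_⟩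
        · rw [hnorm, hind, Finset.card_insert_of_notMem hiS, hcard]
          exact Nat.sub_add_cancel hw1
        · simp
        · rw [hsum, hind, Finset.insert_inter_of_notMem hiE, cast_eq_one_iff_odd]
          exact hodd
      · intro h hh
        simp only [Finset.mem_coe, mem_filter, mem_univ, true_and] at hh
        have hiSh : i ∈ univ.filter (fun j => h j = 1) := by simp [hh.2.1]
        dsimp only
        rw [Finset.insert_erase hiSh]
        funext j
        rcases hz2' (h j) with h1 | h1 <;> simp [h1]
      · intro S hS
        simp only [Finset.mem_coe, mem_filter, mem_powerset] at hS
        have hiS : i ∉ S := fun h => by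
          have := hS.1 h; rw [hEA] at this; simp at this
        dsimp only
        rw [hind, Finset.erase_insert hiS]
    rw [key, count_odd E A hdisj (w - 1), hEcard, hAcard]
    rw [Nat.sub_add_cancel hw1]
  -- COUNT 2
  have c2 : Nat.card {h : Fin n → ZMod 2 // hammingNorm h = w ∧ h i = 1} =
      (n - 1).choose (w - 1) := by
    rw [Nat.card_eq_fintype_card, Fintype.card_subtype]
    have key : (univ.filter (fun h : Fin n → ZMod 2 =>
          hammingNorm h = w ∧ h i = 1)).card =
        ((univ.erase i).powersetCard (w - 1)).card := by
      apply Finset.card_nbij' (fun h => (univ.filter (fun j => h j = 1)).erase i)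
        (fun S => (fun j => if j ∈ insert i S then (1 : ZMod 2) else 0))
      · intro h hh
        simp only [Finset.mem_coe, mem_filter, mem_univ, true_and] at hh
        obtain ⟨h1, h2⟩ := hh
        have hiSh : i ∈ univ.filter (fun j => h j = 1) := by simp [h2]
        rw [Finset.mem_coe, Finset.mem_powersetCard]
        constructor
        · intro a ha
          simp only [mem_erase] at ha ⊢
          exact ⟨ha.1, mem_univ a⟩
        · rw [Finset.card_erase_of_mem hiSh, ← hnorm h, h1]
      · intro S hS
        rw [Finset.mem_coe, Finset.mem_powersetCard] at hS
        obtain ⟨hsub, hcard⟩ := hS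
        have hiS : i ∉ S := fun h => by have := hsub h; simp at this
        simp only [Finset.mem_coe, mem_filter, mem_univ, true_and]
        constructor
        · rw [hnorm, hind, Finset.card_insert_of_notMem hiS, hcard]
          exact Nat.sub_add_cancel hw1
        · simp
      · intro h hh
        simp only [Finset.mem_coe, mem_filter, mem_univ, true_and] at hh
        have hiSh : i ∈ univ.filter (fun j => h j = 1) := by simp [hh.2]
        dsimp only
        rw [Finset.insert_erase hiSh]
        funext j
        rcases hz2' (h j) with h1 | h1 <;> simp [h1]
      · intro S hS
        rw [Finset.mem_coe, Finset.mem_powersetCard] at hS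
        have hiS : i ∉ S := fun h => by have := hS.1 h; simp at this
        dsimp only
        rw [hind, Finset.erase_insert hiS]
    rw [key, Finset.card_powersetCard, Finset.card_erase_of_mem (mem_univ i),
      Finset.card_univ, Fintype.card_fin]
  refine ⟨c1, c2, ?_⟩
  rw [c1, c2]
  congr 1
  push_cast
  apply Finset.sum_congr rfl
  intro j _
  split_ifs <;> push_cast <;> ring
end

section
/- For all integers n, w, t with 2 ≤ w ≤ n and 1 ≤ t ≤ n, the bias ε₁(n,w,t) satisfies ε₁(n,w,t) = −((−2)^{w−2}/C(n−1,w−1)) · p_{w−1}^{n−1}(t−1), where p_v^m is the Krawtchouk polynomial of degree v and order m evaluated at the integer t−1. -/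
open Finset

/-- The bias of statistical decoding on an error position. -/
noncomputable def eps1 (n w t : ℕ) : ℝ :=
  (∑ j ∈ Finset.range w,
      if Even j then ((t - 1).choose j * (n - t).choose (w - 1 - j) : ℝ) else 0) /
    ((n - 1).choose (w - 1) : ℝ) - 1 / 2

/-- Generalized binomial coefficient `C(x, j) = x (x-1) ⋯ (x-j+1) / j!`. -/
noncomputable def genChoose (x : ℝ) (j : ℕ) : ℝ :=
  (∏ k ∈ Finset.range j, (x - k)) / (j.factorial : ℝ)

/-- The Krawtchouk polynomial of degree `v` and order `m`, evaluated at `x`. -/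
noncomputable def krawtchouk (m v : ℕ) (x : ℝ) : ℝ :=
  ((-1 : ℝ) ^ v / 2 ^ v) *
    ∑ j ∈ Finset.range (v + 1),
      (-1 : ℝ) ^ j * genChoose x j * genChoose ((m : ℝ) - x) (v - j)

lemma genChoose_natCast (a j : ℕ) : genChoose (a : ℝ) j = (a.choose j : ℝ) := by
  unfold genChoose
  rcases le_or_gt j a with h | h
  · have hprod : (∏ k ∈ Finset.range j, ((a : ℝ) - k)) = (a.descFactorial j : ℝ) := by
      rw [Nat.descFactorial_eq_prod_range, Nat.cast_prod]
      refine Finset.prod_congr rfl fun k hk => ?_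
      have : k ≤ a := le_trans (le_of_lt (Finset.mem_range.mp hk)) h
      push_cast [Nat.cast_sub this]
      ring
    rw [hprod, Nat.descFactorial_eq_factorial_mul_choose]
    push_cast
    rw [mul_comm, mul_div_assoc, div_self (by exact_mod_cast j.factorial_ne_zero), mul_one]
  · rw [Nat.choose_eq_zero_of_lt h, Finset.prod_eq_zero (Finset.mem_range.mpr h) (by ring)]
    simp

/-- `ε₁(n,w,t) = −((−2)^{w−2}/C(n−1,w−1)) · p_{w−1}^{n−1}(t−1)`. -/
theorem eps1_eq_krawtchouk (n w t : ℕ) (hw : 2 ≤ w) (hwn : w ≤ n)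
    (ht : 1 ≤ t) (htn : t ≤ n) :
    eps1 n w t =
      -(((-2 : ℝ) ^ (w - 2)) / ((n - 1).choose (w - 1) : ℝ)) *
        krawtchouk (n - 1) (w - 1) ((t : ℝ) - 1) := by
  obtain ⟨V, rfl⟩ : ∃ V, w = V + 2 := ⟨w - 2, by omega⟩
  have h1 : V + 2 - 1 = V + 1 := rfl
  have h2 : V + 2 - 2 = V := rfl
  -- cast rewrites
  have hT : ((t : ℝ) - 1) = ((t - 1 : ℕ) : ℝ) := by
    rw [Nat.cast_sub ht]; norm_num
  have hNT : ((n - 1 : ℕ) : ℝ) - ((t - 1 : ℕ) : ℝ) = ((n - t : ℕ) : ℝ) := by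
    rw [← Nat.cast_sub (by omega)]
    congr 1
    omega
  set a : ℕ → ℝ := fun j => ((t - 1).choose j * (n - t).choose (V + 1 - j) : ℝ) with ha
  -- Vandermonde
  have hvanN : ∑ j ∈ Finset.range (V + 2), (t - 1).choose j * (n - t).choose (V + 1 - j)
      = (n - 1).choose (V + 1) := by
    have h := Nat.add_choose_eq (t - 1) (n - t) (V + 1)
    rw [Finset.Nat.sum_antidiagonal_eq_sum_range_succ_mk] at h
    have heq : t - 1 + (n - t) = n - 1 := by omega
    rw [heq] at h
    exact h.symm
  have hvan : ∑ j ∈ Finset.range (V + 2), a j = ((n - 1).choose (V + 1) : ℝ) := by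
    rw [← hvanN]
    push_cast
    rfl
  have hC : ((n - 1).choose (V + 1) : ℝ) ≠ 0 := by
    have : V + 1 ≤ n - 1 := by omega
    exact_mod_cast (Nat.choose_pos this).ne'
  -- even split
  have hsplit : ∑ j ∈ Finset.range (V + 2), (if Even j then a j else 0)
      = (∑ j ∈ Finset.range (V + 2), a j
          + ∑ j ∈ Finset.range (V + 2), (-1 : ℝ) ^ j * a j) / 2 := by
    rw [← Finset.sum_add_distrib, Finset.sum_div]
    refine Finset.sum_congr rfl fun j _ => ?_
    rcases Nat.even_or_odd j with h | h
    · rw [if_pos h, h.neg_one_pow]; ring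
    · rw [if_neg (Nat.not_even_iff_odd.mpr h), h.neg_one_pow]; ring
  unfold eps1 krawtchouk
  rw [h1, h2]
  have hgen : ∀ j, genChoose ((t : ℝ) - 1) j = ((t - 1 : ℕ).choose j : ℝ) := by
    intro j; rw [hT, genChoose_natCast]
  have hgen2 : ∀ j, genChoose (((n - 1 : ℕ) : ℝ) - ((t : ℝ) - 1)) j
      = ((n - t : ℕ).choose j : ℝ) := by
    intro j; rw [hT, hNT, genChoose_natCast]
  simp only [hgen, hgen2]
  have hbody : ∑ j ∈ Finset.range (V + 1 + 1),
      (-1 : ℝ) ^ j * ((t - 1 : ℕ).choose j : ℝ) * ((n - t : ℕ).choose (V + 1 - j) : ℝ)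
      = ∑ j ∈ Finset.range (V + 2), (-1 : ℝ) ^ j * a j := by
    refine Finset.sum_congr rfl fun j _ => ?_
    simp only [ha, mul_assoc]
  rw [hbody]
  have hbody2 : (∑ j ∈ Finset.range (V + 2),
      if Even j then ((t - 1).choose j * (n - t).choose (V + 1 - j) : ℝ) else 0)
      = ∑ j ∈ Finset.range (V + 2), (if Even j then a j else 0) := by
    refine Finset.sum_congr rfl fun j _ => ?_
    simp only [ha]
  rw [hbody2, hsplit, hvan]
  set A := ∑ j ∈ Finset.range (V + 2), (-1 : ℝ) ^ j * a j
  set C := ((n - 1).choose (V + 1) : ℝ)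
  have h3 : (-2 : ℝ) ^ V * (-1 : ℝ) ^ V = 2 ^ V := by rw [← mul_pow]; norm_num
  have key : -((-2 : ℝ) ^ V * ((-1 : ℝ) ^ (V + 1) / 2 ^ (V + 1))) = 1 / 2 := by
    have h2V : (2 : ℝ) ^ V ≠ 0 := by positivity
    rw [pow_succ (-1 : ℝ), pow_succ (2 : ℝ)]
    field_simp
    linear_combination h3
  rw [show -(((-2 : ℝ) ^ V) / C) * ((-1 : ℝ) ^ (V + 1) / 2 ^ (V + 1) * A)
      = (-((-2 : ℝ) ^ V * ((-1 : ℝ) ^ (V + 1) / 2 ^ (V + 1)))) * (A / C) from by ring, key]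
  field_simp
  ring
end
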